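/- Let n ≥ 1 be an integer, a ∈ (−1,1), and let Ω ⊆ ℝⁿ × (0,∞) be open. Let b_{ij} : ℝⁿ → ℝ (1 ≤ i,j ≤ n) be C¹ functions with b_{ij} = b_{ji}, let f : ℝⁿ → ℝ be any function, and let V : Ω → ℝ be of class C³ satisfying Σ_{i,j=1}^n ∂_{x_i}( b_{ij}(x) ∂_{x_j}V(x,y) ) + ∂_{yy}V(x,y) + (a/y) ∂_y V(x,y) = f(x) for every (x,y) ∈ Ω. Then the function w(x,y) := y^a ∂_y V(x,y) satisfies the conjugate equation Σ_{i,j=1}^n ∂_{x_i}( b_{ij}(x) ∂_{x_j}w(x,y) ) + ∂_{yy}w(x,y) − (a/y) ∂_y w(x,y) = 0 for every (x,y) ∈ Ω. -/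

import Mathlib

open Filter

section Aux

variable {E : Type*} [NormedAddCommGroup E] [NormedSpace ℝ E]

lemma aux_cd_fderiv_apply {g : E → ℝ} {p : E} {m n : ℕ} (h : ContDiffAt ℝ n g p)
    (hmn : m + 1 ≤ n) (v : E) : ContDiffAt ℝ m (fun q => fderiv ℝ g q v) p := by
  have h1 : ContDiffAt ℝ m (fderiv ℝ g) p := h.fderiv_right (by exact_mod_cast hmn)
  exact (ContinuousLinearMap.apply ℝ ℝ v).contDiff.comp_contDiffAt p h1

lemma aux_swap {g : E → ℝ} {p : E} (h : ContDiffAt ℝ 2 g p) (v w : E) :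
    fderiv ℝ (fun q => fderiv ℝ g q v) p w = fderiv ℝ (fun q => fderiv ℝ g q w) p v := by
  have hd : DifferentiableAt ℝ (fderiv ℝ g) p :=
    (h.fderiv_right (m := 1) (by norm_num)).differentiableAt (by norm_num)
  have h1 : ∀ u : E, fderiv ℝ (fun q => fderiv ℝ g q u) p =
      (ContinuousLinearMap.apply ℝ ℝ u).comp (fderiv ℝ (fderiv ℝ g) p) := by
    intro u
    exact ((ContinuousLinearMap.apply ℝ ℝ u).hasFDerivAt.comp p hd.hasFDerivAt).fderiv
  rw [h1 v, h1 w]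
  simpa using (h.isSymmSndFDerivAt (by norm_num)).eq w v

end Aux


/-- **Conjugation principle (pointwise form).** If `V` is `C³` on an open
`Ω ⊆ ℝⁿ × (0,∞)` and satisfies
`Σ_{i,j} ∂_{x_i}(b_{ij}(x) ∂_{x_j}V) + ∂_{yy}V + (a/y)∂_y V = f(x)` on `Ω`, where the
`b_{ij}` are symmetric `C¹` functions of `x`, then `w = y^a ∂_y V` satisfies
`Σ_{i,j} ∂_{x_i}(b_{ij}(x) ∂_{x_j}w) + ∂_{yy}w − (a/y)∂_y w = 0` on `Ω`.
Here `∂_{x_i}g(p) = fderiv ℝ g p (eᵢ, 0)` and `∂_y g(p) = fderiv ℝ g p (0, 1)`. -/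
theorem statement8 (n : ℕ) (hn : 1 ≤ n) (a : ℝ) (ha : a ∈ Set.Ioo (-1 : ℝ) 1)
    (Ω : Set (EuclideanSpace ℝ (Fin n) × ℝ)) (hΩopen : IsOpen Ω)
    (hΩup : ∀ p ∈ Ω, 0 < p.2)
    (b : Fin n → Fin n → EuclideanSpace ℝ (Fin n) → ℝ)
    (hbC1 : ∀ i j, ContDiff ℝ 1 (b i j))
    (hbsym : ∀ i j, b i j = b j i)
    (f : EuclideanSpace ℝ (Fin n) → ℝ)
    (V : EuclideanSpace ℝ (Fin n) × ℝ → ℝ)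
    (hV : ContDiffOn ℝ 3 V Ω)
    (hPDE : ∀ p ∈ Ω,
      (∑ i : Fin n, ∑ j : Fin n,
          fderiv ℝ
            (fun q : EuclideanSpace ℝ (Fin n) × ℝ =>
              b i j q.1 *
                fderiv ℝ V q ((EuclideanSpace.single j (1 : ℝ)), (0 : ℝ))) p
            ((EuclideanSpace.single i (1 : ℝ)), (0 : ℝ)))
        + fderiv ℝ
            (fun q : EuclideanSpace ℝ (Fin n) × ℝ =>
              fderiv ℝ V q ((0 : EuclideanSpace ℝ (Fin n)), (1 : ℝ))) p
            ((0 : EuclideanSpace ℝ (Fin n)), (1 : ℝ))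
        + (a / p.2) * fderiv ℝ V p ((0 : EuclideanSpace ℝ (Fin n)), (1 : ℝ))
      = f p.1) :
    ∀ p ∈ Ω,
      (∑ i : Fin n, ∑ j : Fin n,
          fderiv ℝ
            (fun q : EuclideanSpace ℝ (Fin n) × ℝ =>
              b i j q.1 *
                fderiv ℝ
                  (fun q' : EuclideanSpace ℝ (Fin n) × ℝ =>
                    q'.2 ^ a *
                      fderiv ℝ V q' ((0 : EuclideanSpace ℝ (Fin n)), (1 : ℝ))) q
                  ((EuclideanSpace.single j (1 : ℝ)), (0 : ℝ))) p
            ((EuclideanSpace.single i (1 : ℝ)), (0 : ℝ)))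
        + fderiv ℝ
            (fun q : EuclideanSpace ℝ (Fin n) × ℝ =>
              fderiv ℝ
                (fun q' : EuclideanSpace ℝ (Fin n) × ℝ =>
                  q'.2 ^ a *
                    fderiv ℝ V q' ((0 : EuclideanSpace ℝ (Fin n)), (1 : ℝ))) q
                ((0 : EuclideanSpace ℝ (Fin n)), (1 : ℝ))) p
            ((0 : EuclideanSpace ℝ (Fin n)), (1 : ℝ))
        - (a / p.2) *
            fderiv ℝ
              (fun q' : EuclideanSpace ℝ (Fin n) × ℝ =>
                q'.2 ^ a *
                  fderiv ℝ V q' ((0 : EuclideanSpace ℝ (Fin n)), (1 : ℝ))) p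
              ((0 : EuclideanSpace ℝ (Fin n)), (1 : ℝ))
      = 0 := by
  intro p hp
  have hy : 0 < p.2 := hΩup p hp
  have hmem : Ω ∈ nhds p := hΩopen.mem_nhds hp
  have hV3 : ∀ q ∈ Ω, ContDiffAt ℝ 3 V q := fun q hq => hV.contDiffAt (hΩopen.mem_nhds hq)
  -- C² of ∂_y V and ∂_{x_j} V at points of Ω
  have hu2 : ∀ q ∈ Ω, ContDiffAt ℝ 2
      (fun q' : EuclideanSpace ℝ (Fin n) × ℝ =>
        fderiv ℝ V q' ((0 : EuclideanSpace ℝ (Fin n)), (1 : ℝ))) q :=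
    fun q hq => aux_cd_fderiv_apply (hV3 q hq) (by norm_num) _
  have hDj2 : ∀ (j : Fin n), ∀ q ∈ Ω, ContDiffAt ℝ 2
      (fun q' : EuclideanSpace ℝ (Fin n) × ℝ =>
        fderiv ℝ V q' ((EuclideanSpace.single j (1 : ℝ)), (0 : ℝ))) q :=
    fun j q hq => aux_cd_fderiv_apply (hV3 q hq) (by norm_num) _
  have hS21 : ∀ (j : Fin n), ∀ q ∈ Ω, ContDiffAt ℝ 1
      (fun q' : EuclideanSpace ℝ (Fin n) × ℝ =>
        fderiv ℝ (fun q'' : EuclideanSpace ℝ (Fin n) × ℝ =>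
          fderiv ℝ V q'' ((EuclideanSpace.single j (1 : ℝ)), (0 : ℝ))) q'
          ((0 : EuclideanSpace ℝ (Fin n)), (1 : ℝ))) q :=
    fun j q hq => aux_cd_fderiv_apply (hDj2 j q hq) (by norm_num) _
  have hA1 : ∀ (i j : Fin n), ∀ q ∈ Ω, ContDiffAt ℝ 1
      (fun q' : EuclideanSpace ℝ (Fin n) × ℝ =>
        fderiv ℝ (fun q'' : EuclideanSpace ℝ (Fin n) × ℝ =>
          fderiv ℝ V q'' ((EuclideanSpace.single j (1 : ℝ)), (0 : ℝ))) q'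
          ((EuclideanSpace.single i (1 : ℝ)), (0 : ℝ))) q :=
    fun i j q hq => aux_cd_fderiv_apply (hDj2 j q hq) (by norm_num) _
  have hDyy1 : ∀ q ∈ Ω, ContDiffAt ℝ 1
      (fun q' : EuclideanSpace ℝ (Fin n) × ℝ =>
        fderiv ℝ (fun q'' : EuclideanSpace ℝ (Fin n) × ℝ =>
          fderiv ℝ V q'' ((0 : EuclideanSpace ℝ (Fin n)), (1 : ℝ))) q'
          ((0 : EuclideanSpace ℝ (Fin n)), (1 : ℝ))) q :=
    fun q hq => aux_cd_fderiv_apply (hu2 q hq) (by norm_num) _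
  -- rpow derivative
  have hrpow : ∀ (c : ℝ) (q : EuclideanSpace ℝ (Fin n) × ℝ), 0 < q.2 →
      HasFDerivAt (fun q' : EuclideanSpace ℝ (Fin n) × ℝ => q'.2 ^ c)
        ((c * q.2 ^ (c - 1)) • ContinuousLinearMap.snd ℝ (EuclideanSpace ℝ (Fin n)) ℝ) q :=
    fun c q hq => (Real.hasDerivAt_rpow_const (x := q.2) (p := c)
      (Or.inl hq.ne')).comp_hasFDerivAt q
      (hasFDerivAt_snd : HasFDerivAt _ (ContinuousLinearMap.snd ℝ (EuclideanSpace ℝ (Fin n)) ℝ) q)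
  -- derivative of w = y^a ∂_y V at points of Ω
  have hW : ∀ q ∈ Ω, HasFDerivAt
      (fun q' : EuclideanSpace ℝ (Fin n) × ℝ =>
        q'.2 ^ a * fderiv ℝ V q' ((0 : EuclideanSpace ℝ (Fin n)), (1 : ℝ)))
      ((q.2 ^ a) • (fderiv ℝ (fun q' : EuclideanSpace ℝ (Fin n) × ℝ =>
          fderiv ℝ V q' ((0 : EuclideanSpace ℝ (Fin n)), (1 : ℝ))) q)
        + ((a * q.2 ^ (a - 1)) • ContinuousLinearMap.snd ℝ (EuclideanSpace ℝ (Fin n)) ℝ).smulRight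
            (fderiv ℝ V q ((0 : EuclideanSpace ℝ (Fin n)), (1 : ℝ)))) q :=
    fun q hq => (hrpow a q (hΩup q hq)).mul'
      (((hu2 q hq).differentiableAt (by norm_num)).hasFDerivAt)
  have hWy : ∀ q ∈ Ω, fderiv ℝ
      (fun q' : EuclideanSpace ℝ (Fin n) × ℝ =>
        q'.2 ^ a * fderiv ℝ V q' ((0 : EuclideanSpace ℝ (Fin n)), (1 : ℝ))) q
      ((0 : EuclideanSpace ℝ (Fin n)), (1 : ℝ))
      = q.2 ^ a * fderiv ℝ (fun q' : EuclideanSpace ℝ (Fin n) × ℝ =>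
          fderiv ℝ V q' ((0 : EuclideanSpace ℝ (Fin n)), (1 : ℝ))) q
          ((0 : EuclideanSpace ℝ (Fin n)), (1 : ℝ))
        + a * q.2 ^ (a - 1) * fderiv ℝ V q ((0 : EuclideanSpace ℝ (Fin n)), (1 : ℝ)) := by
    intro q hq
    rw [(hW q hq).fderiv]
    simp [mul_comm]
  have hWx : ∀ (j : Fin n), ∀ q ∈ Ω, fderiv ℝ
      (fun q' : EuclideanSpace ℝ (Fin n) × ℝ =>
        q'.2 ^ a * fderiv ℝ V q' ((0 : EuclideanSpace ℝ (Fin n)), (1 : ℝ))) q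
      ((EuclideanSpace.single j (1 : ℝ)), (0 : ℝ))
      = q.2 ^ a * fderiv ℝ (fun q' : EuclideanSpace ℝ (Fin n) × ℝ =>
          fderiv ℝ V q' ((EuclideanSpace.single j (1 : ℝ)), (0 : ℝ))) q
          ((0 : EuclideanSpace ℝ (Fin n)), (1 : ℝ)) := by
    intro j q hq
    rw [(hW q hq).fderiv]
    have hsw := aux_swap ((hV3 q hq).of_le (by norm_num))
      ((0 : EuclideanSpace ℝ (Fin n)), (1 : ℝ))
      ((EuclideanSpace.single j (1 : ℝ)), (0 : ℝ))
    simp [hsw]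
  -- derivative of b ∘ fst
  have hbf : ∀ (i j : Fin n) (q : EuclideanSpace ℝ (Fin n) × ℝ),
      HasFDerivAt (fun q' : EuclideanSpace ℝ (Fin n) × ℝ => b i j q'.1)
        ((fderiv ℝ (b i j) q.1).comp
          (ContinuousLinearMap.fst ℝ (EuclideanSpace ℝ (Fin n)) ℝ)) q :=
    fun i j q => (((hbC1 i j).differentiable (by norm_num) q.1).hasFDerivAt).comp q hasFDerivAt_fst
  -- the sum terms of the goal
  have Hsum : ∀ i j : Fin n,
      fderiv ℝ
        (fun q : EuclideanSpace ℝ (Fin n) × ℝ =>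
          b i j q.1 *
            fderiv ℝ
              (fun q' : EuclideanSpace ℝ (Fin n) × ℝ =>
                q'.2 ^ a *
                  fderiv ℝ V q' ((0 : EuclideanSpace ℝ (Fin n)), (1 : ℝ))) q
              ((EuclideanSpace.single j (1 : ℝ)), (0 : ℝ))) p
        ((EuclideanSpace.single i (1 : ℝ)), (0 : ℝ))
      = fderiv ℝ (b i j) p.1 (EuclideanSpace.single i (1 : ℝ)) *
          (p.2 ^ a * fderiv ℝ (fun q' : EuclideanSpace ℝ (Fin n) × ℝ =>
            fderiv ℝ V q' ((EuclideanSpace.single j (1 : ℝ)), (0 : ℝ))) p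
            ((0 : EuclideanSpace ℝ (Fin n)), (1 : ℝ)))
        + b i j p.1 *
          (p.2 ^ a * fderiv ℝ (fun q' : EuclideanSpace ℝ (Fin n) × ℝ =>
            fderiv ℝ (fun q'' : EuclideanSpace ℝ (Fin n) × ℝ =>
              fderiv ℝ V q'' ((EuclideanSpace.single j (1 : ℝ)), (0 : ℝ))) q'
              ((EuclideanSpace.single i (1 : ℝ)), (0 : ℝ))) p
            ((0 : EuclideanSpace ℝ (Fin n)), (1 : ℝ))) := by
    intro i j
    have heq : (fun q : EuclideanSpace ℝ (Fin n) × ℝ =>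
        b i j q.1 *
          fderiv ℝ
            (fun q' : EuclideanSpace ℝ (Fin n) × ℝ =>
              q'.2 ^ a *
                fderiv ℝ V q' ((0 : EuclideanSpace ℝ (Fin n)), (1 : ℝ))) q
            ((EuclideanSpace.single j (1 : ℝ)), (0 : ℝ)))
        =ᶠ[nhds p] (fun q : EuclideanSpace ℝ (Fin n) × ℝ =>
          b i j q.1 * (q.2 ^ a *
            fderiv ℝ (fun q' : EuclideanSpace ℝ (Fin n) × ℝ =>
              fderiv ℝ V q' ((EuclideanSpace.single j (1 : ℝ)), (0 : ℝ))) q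
              ((0 : EuclideanSpace ℝ (Fin n)), (1 : ℝ)))) := by
      filter_upwards [hmem] with q hq
      rw [hWx j q hq]
    rw [heq.fderiv_eq]
    have h2 : HasFDerivAt (fun q : EuclideanSpace ℝ (Fin n) × ℝ =>
        b i j q.1 * (q.2 ^ a *
          fderiv ℝ (fun q' : EuclideanSpace ℝ (Fin n) × ℝ =>
            fderiv ℝ V q' ((EuclideanSpace.single j (1 : ℝ)), (0 : ℝ))) q
            ((0 : EuclideanSpace ℝ (Fin n)), (1 : ℝ)))) _ p :=
      (hbf i j p).mul' ((hrpow a p hy).mul'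
        (((hS21 j p hp).differentiableAt (by norm_num)).hasFDerivAt))
    rw [h2.fderiv]
    have hsw := aux_swap (hDj2 j p hp)
      ((0 : EuclideanSpace ℝ (Fin n)), (1 : ℝ))
      ((EuclideanSpace.single i (1 : ℝ)), (0 : ℝ))
    simp [hsw]
    ring
  -- second y-derivative of w
  have H2 : fderiv ℝ
      (fun q : EuclideanSpace ℝ (Fin n) × ℝ =>
        fderiv ℝ
          (fun q' : EuclideanSpace ℝ (Fin n) × ℝ =>
            q'.2 ^ a *
              fderiv ℝ V q' ((0 : EuclideanSpace ℝ (Fin n)), (1 : ℝ))) q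
          ((0 : EuclideanSpace ℝ (Fin n)), (1 : ℝ))) p
      ((0 : EuclideanSpace ℝ (Fin n)), (1 : ℝ))
      = p.2 ^ a * fderiv ℝ (fun q' : EuclideanSpace ℝ (Fin n) × ℝ =>
          fderiv ℝ (fun q'' : EuclideanSpace ℝ (Fin n) × ℝ =>
            fderiv ℝ V q'' ((0 : EuclideanSpace ℝ (Fin n)), (1 : ℝ))) q'
            ((0 : EuclideanSpace ℝ (Fin n)), (1 : ℝ))) p
          ((0 : EuclideanSpace ℝ (Fin n)), (1 : ℝ))
        + a * p.2 ^ (a - 1) *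
            fderiv ℝ (fun q'' : EuclideanSpace ℝ (Fin n) × ℝ =>
              fderiv ℝ V q'' ((0 : EuclideanSpace ℝ (Fin n)), (1 : ℝ))) p
              ((0 : EuclideanSpace ℝ (Fin n)), (1 : ℝ))
        + (a * p.2 ^ (a - 1) *
            fderiv ℝ (fun q'' : EuclideanSpace ℝ (Fin n) × ℝ =>
              fderiv ℝ V q'' ((0 : EuclideanSpace ℝ (Fin n)), (1 : ℝ))) p
              ((0 : EuclideanSpace ℝ (Fin n)), (1 : ℝ))
          + a * ((a - 1) * p.2 ^ (a - 1 - 1)) *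
              fderiv ℝ V p ((0 : EuclideanSpace ℝ (Fin n)), (1 : ℝ))) := by
    have heq : (fun q : EuclideanSpace ℝ (Fin n) × ℝ =>
        fderiv ℝ
          (fun q' : EuclideanSpace ℝ (Fin n) × ℝ =>
            q'.2 ^ a *
              fderiv ℝ V q' ((0 : EuclideanSpace ℝ (Fin n)), (1 : ℝ))) q
          ((0 : EuclideanSpace ℝ (Fin n)), (1 : ℝ)))
        =ᶠ[nhds p] (fun q : EuclideanSpace ℝ (Fin n) × ℝ =>
          q.2 ^ a * fderiv ℝ (fun q' : EuclideanSpace ℝ (Fin n) × ℝ =>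
            fderiv ℝ V q' ((0 : EuclideanSpace ℝ (Fin n)), (1 : ℝ))) q
            ((0 : EuclideanSpace ℝ (Fin n)), (1 : ℝ))
          + a * q.2 ^ (a - 1) *
              fderiv ℝ V q ((0 : EuclideanSpace ℝ (Fin n)), (1 : ℝ))) := by
      filter_upwards [hmem] with q hq
      exact hWy q hq
    rw [heq.fderiv_eq]
    have hmulc : HasFDerivAt (fun q : EuclideanSpace ℝ (Fin n) × ℝ => a * q.2 ^ (a - 1))
        ((a * ((a - 1) * p.2 ^ (a - 1 - 1))) •
          ContinuousLinearMap.snd ℝ (EuclideanSpace ℝ (Fin n)) ℝ) p := by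
      have := ((Real.hasDerivAt_rpow_const (x := p.2) (p := a - 1)
        (Or.inl hy.ne')).const_mul a).comp_hasFDerivAt p
        (hasFDerivAt_snd : HasFDerivAt _
          (ContinuousLinearMap.snd ℝ (EuclideanSpace ℝ (Fin n)) ℝ) p)
      exact this
    have h2 : HasFDerivAt (fun q : EuclideanSpace ℝ (Fin n) × ℝ =>
        q.2 ^ a * fderiv ℝ (fun q' : EuclideanSpace ℝ (Fin n) × ℝ =>
          fderiv ℝ V q' ((0 : EuclideanSpace ℝ (Fin n)), (1 : ℝ))) q
          ((0 : EuclideanSpace ℝ (Fin n)), (1 : ℝ))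
        + a * q.2 ^ (a - 1) *
            fderiv ℝ V q ((0 : EuclideanSpace ℝ (Fin n)), (1 : ℝ))) _ p :=
      ((hrpow a p hy).mul'
        (((hDyy1 p hp).differentiableAt (by norm_num)).hasFDerivAt)).add
        (hmulc.mul' (((hu2 p hp).differentiableAt (by norm_num)).hasFDerivAt))
    rw [h2.fderiv]
    simp
    ring
  -- first y-derivative of w at p
  have H3 := hWy p hp
  -- rewrite the PDE with the product rule
  have hPDE' : ∀ q ∈ Ω,
      (∑ i : Fin n, ∑ j : Fin n,
        (fderiv ℝ (b i j) q.1 (EuclideanSpace.single i (1 : ℝ)) *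
            fderiv ℝ V q ((EuclideanSpace.single j (1 : ℝ)), (0 : ℝ))
          + b i j q.1 *
            fderiv ℝ (fun q' : EuclideanSpace ℝ (Fin n) × ℝ =>
              fderiv ℝ V q' ((EuclideanSpace.single j (1 : ℝ)), (0 : ℝ))) q
              ((EuclideanSpace.single i (1 : ℝ)), (0 : ℝ))))
        + fderiv ℝ (fun q' : EuclideanSpace ℝ (Fin n) × ℝ =>
            fderiv ℝ V q' ((0 : EuclideanSpace ℝ (Fin n)), (1 : ℝ))) q
            ((0 : EuclideanSpace ℝ (Fin n)), (1 : ℝ))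
        + a * q.2⁻¹ * fderiv ℝ V q ((0 : EuclideanSpace ℝ (Fin n)), (1 : ℝ))
      = f q.1 := by
    intro q hq
    have hterm : ∀ i j : Fin n,
        fderiv ℝ
          (fun q' : EuclideanSpace ℝ (Fin n) × ℝ =>
            b i j q'.1 *
              fderiv ℝ V q' ((EuclideanSpace.single j (1 : ℝ)), (0 : ℝ))) q
          ((EuclideanSpace.single i (1 : ℝ)), (0 : ℝ))
        = fderiv ℝ (b i j) q.1 (EuclideanSpace.single i (1 : ℝ)) *
            fderiv ℝ V q ((EuclideanSpace.single j (1 : ℝ)), (0 : ℝ))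
          + b i j q.1 *
            fderiv ℝ (fun q' : EuclideanSpace ℝ (Fin n) × ℝ =>
              fderiv ℝ V q' ((EuclideanSpace.single j (1 : ℝ)), (0 : ℝ))) q
              ((EuclideanSpace.single i (1 : ℝ)), (0 : ℝ)) := by
      intro i j
      have h2 : HasFDerivAt
          (fun q' : EuclideanSpace ℝ (Fin n) × ℝ =>
            b i j q'.1 *
              fderiv ℝ V q' ((EuclideanSpace.single j (1 : ℝ)), (0 : ℝ))) _ q :=
        (hbf i j q).mul' (((hDj2 j q hq).differentiableAt (by norm_num)).hasFDerivAt)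
      rw [h2.fderiv]
      simp
      ring
    have := hPDE q hq
    simp only [hterm] at this
    rw [div_eq_mul_inv] at this
    exact this
  -- the slice function and its derivative
  have hι : HasDerivAt (fun t : ℝ => ((p.1, t) : EuclideanSpace ℝ (Fin n) × ℝ))
      (((0 : EuclideanSpace ℝ (Fin n)), (1 : ℝ))) p.2 :=
    (hasDerivAt_const p.2 p.1).prodMk (hasDerivAt_id p.2)
  have hslice : ∀ (g : EuclideanSpace ℝ (Fin n) × ℝ → ℝ), DifferentiableAt ℝ g p →
      HasDerivAt (fun t => g (p.1, t))
        (fderiv ℝ g p ((0 : EuclideanSpace ℝ (Fin n)), (1 : ℝ))) p.2 :=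
    fun g hg => hg.hasFDerivAt.comp_hasDerivAt p.2 hι
  have hS : HasDerivAt (fun t : ℝ =>
      (∑ i : Fin n, ∑ j : Fin n,
        (fderiv ℝ (b i j) p.1 (EuclideanSpace.single i (1 : ℝ)) *
            fderiv ℝ V (p.1, t) ((EuclideanSpace.single j (1 : ℝ)), (0 : ℝ))
          + b i j p.1 *
            fderiv ℝ (fun q' : EuclideanSpace ℝ (Fin n) × ℝ =>
              fderiv ℝ V q' ((EuclideanSpace.single j (1 : ℝ)), (0 : ℝ))) (p.1, t)
              ((EuclideanSpace.single i (1 : ℝ)), (0 : ℝ))))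
        + fderiv ℝ (fun q' : EuclideanSpace ℝ (Fin n) × ℝ =>
            fderiv ℝ V q' ((0 : EuclideanSpace ℝ (Fin n)), (1 : ℝ))) (p.1, t)
            ((0 : EuclideanSpace ℝ (Fin n)), (1 : ℝ))
        + a * t⁻¹ * fderiv ℝ V (p.1, t) ((0 : EuclideanSpace ℝ (Fin n)), (1 : ℝ)))
      ((∑ i : Fin n, ∑ j : Fin n,
        (fderiv ℝ (b i j) p.1 (EuclideanSpace.single i (1 : ℝ)) *
            fderiv ℝ (fun q' : EuclideanSpace ℝ (Fin n) × ℝ =>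
              fderiv ℝ V q' ((EuclideanSpace.single j (1 : ℝ)), (0 : ℝ))) p
              ((0 : EuclideanSpace ℝ (Fin n)), (1 : ℝ))
          + b i j p.1 *
            fderiv ℝ (fun q' : EuclideanSpace ℝ (Fin n) × ℝ =>
              fderiv ℝ (fun q'' : EuclideanSpace ℝ (Fin n) × ℝ =>
                fderiv ℝ V q'' ((EuclideanSpace.single j (1 : ℝ)), (0 : ℝ))) q'
                ((EuclideanSpace.single i (1 : ℝ)), (0 : ℝ))) p
              ((0 : EuclideanSpace ℝ (Fin n)), (1 : ℝ))))
        + fderiv ℝ (fun q' : EuclideanSpace ℝ (Fin n) × ℝ =>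
            fderiv ℝ (fun q'' : EuclideanSpace ℝ (Fin n) × ℝ =>
              fderiv ℝ V q'' ((0 : EuclideanSpace ℝ (Fin n)), (1 : ℝ))) q'
              ((0 : EuclideanSpace ℝ (Fin n)), (1 : ℝ))) p
            ((0 : EuclideanSpace ℝ (Fin n)), (1 : ℝ))
        + ((a * -(p.2 ^ 2)⁻¹) * fderiv ℝ V p ((0 : EuclideanSpace ℝ (Fin n)), (1 : ℝ))
          + (a * p.2⁻¹) *
            fderiv ℝ (fun q'' : EuclideanSpace ℝ (Fin n) × ℝ =>
              fderiv ℝ V q'' ((0 : EuclideanSpace ℝ (Fin n)), (1 : ℝ))) p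
              ((0 : EuclideanSpace ℝ (Fin n)), (1 : ℝ)))) p.2 := by
    refine HasDerivAt.add (HasDerivAt.add (HasDerivAt.fun_sum fun i _ => HasDerivAt.fun_sum
      fun j _ => HasDerivAt.add ?_ ?_) ?_) ?_
    · exact (hslice _ ((hDj2 j p hp).differentiableAt (by norm_num))).const_mul _
    · exact (hslice _ ((hA1 i j p hp).differentiableAt (by norm_num))).const_mul _
    · exact hslice _ ((hDyy1 p hp).differentiableAt (by norm_num))
    · exact ((hasDerivAt_inv hy.ne').const_mul a).mul
        (hslice _ ((hu2 p hp).differentiableAt (by norm_num)))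
  -- the slice is eventually constant
  have hc : Continuous (fun t : ℝ => ((p.1, t) : EuclideanSpace ℝ (Fin n) × ℝ)) :=
    continuous_const.prodMk continuous_id
  have hnb : (fun t : ℝ => ((p.1, t) : EuclideanSpace ℝ (Fin n) × ℝ)) ⁻¹' Ω ∈ nhds p.2 :=
    (hΩopen.preimage hc).mem_nhds hp
  have hconst : (fun t : ℝ =>
      (∑ i : Fin n, ∑ j : Fin n,
        (fderiv ℝ (b i j) p.1 (EuclideanSpace.single i (1 : ℝ)) *
            fderiv ℝ V (p.1, t) ((EuclideanSpace.single j (1 : ℝ)), (0 : ℝ))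
          + b i j p.1 *
            fderiv ℝ (fun q' : EuclideanSpace ℝ (Fin n) × ℝ =>
              fderiv ℝ V q' ((EuclideanSpace.single j (1 : ℝ)), (0 : ℝ))) (p.1, t)
              ((EuclideanSpace.single i (1 : ℝ)), (0 : ℝ))))
        + fderiv ℝ (fun q' : EuclideanSpace ℝ (Fin n) × ℝ =>
            fderiv ℝ V q' ((0 : EuclideanSpace ℝ (Fin n)), (1 : ℝ))) (p.1, t)
            ((0 : EuclideanSpace ℝ (Fin n)), (1 : ℝ))
        + a * t⁻¹ * fderiv ℝ V (p.1, t) ((0 : EuclideanSpace ℝ (Fin n)), (1 : ℝ)))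
      =ᶠ[nhds p.2] fun _ => f p.1 := by
    filter_upwards [hnb] with t ht
    exact hPDE' (p.1, t) ht
  have hstar : ((∑ i : Fin n, ∑ j : Fin n, (fderiv ℝ (b i j) p.1 (EuclideanSpace.single i (1 : ℝ)) * fderiv ℝ (fun q' : EuclideanSpace ℝ (Fin n) × ℝ => fderiv ℝ V q' ((EuclideanSpace.single j (1 : ℝ)), (0 : ℝ))) p ((0 : EuclideanSpace ℝ (Fin n)), (1 : ℝ)) + b i j p.1 * fderiv ℝ (fun q' : EuclideanSpace ℝ (Fin n) × ℝ => fderiv ℝ (fun q'' : EuclideanSpace ℝ (Fin n) × ℝ => fderiv ℝ V q'' ((EuclideanSpace.single j (1 : ℝ)), (0 : ℝ))) q' ((EuclideanSpace.single i (1 : ℝ)), (0 : ℝ))) p ((0 : EuclideanSpace ℝ (Fin n)), (1 : ℝ))))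
        + fderiv ℝ (fun q' : EuclideanSpace ℝ (Fin n) × ℝ => fderiv ℝ (fun q'' : EuclideanSpace ℝ (Fin n) × ℝ => fderiv ℝ V q'' ((0 : EuclideanSpace ℝ (Fin n)), (1 : ℝ))) q' ((0 : EuclideanSpace ℝ (Fin n)), (1 : ℝ))) p ((0 : EuclideanSpace ℝ (Fin n)), (1 : ℝ))
        + ((a * -(p.2 ^ 2)⁻¹) * fderiv ℝ V p ((0 : EuclideanSpace ℝ (Fin n)), (1 : ℝ))
          + (a * p.2⁻¹) * fderiv ℝ (fun q'' : EuclideanSpace ℝ (Fin n) × ℝ => fderiv ℝ V q'' ((0 : EuclideanSpace ℝ (Fin n)), (1 : ℝ))) p ((0 : EuclideanSpace ℝ (Fin n)), (1 : ℝ)))) = 0 := by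
    rw [← hS.deriv, hconst.deriv_eq]
    simp
  -- final assembly
  simp only [Hsum]
  rw [H2, H3]
  have hfac : (∑ i : Fin n, ∑ j : Fin n, (fderiv ℝ (b i j) p.1 (EuclideanSpace.single i (1 : ℝ)) * (p.2 ^ a * fderiv ℝ (fun q' : EuclideanSpace ℝ (Fin n) × ℝ => fderiv ℝ V q' ((EuclideanSpace.single j (1 : ℝ)), (0 : ℝ))) p ((0 : EuclideanSpace ℝ (Fin n)), (1 : ℝ))) + b i j p.1 * (p.2 ^ a * fderiv ℝ (fun q' : EuclideanSpace ℝ (Fin n) × ℝ => fderiv ℝ (fun q'' : EuclideanSpace ℝ (Fin n) × ℝ => fderiv ℝ V q'' ((EuclideanSpace.single j (1 : ℝ)), (0 : ℝ))) q' ((EuclideanSpace.single i (1 : ℝ)), (0 : ℝ))) p ((0 : EuclideanSpace ℝ (Fin n)), (1 : ℝ))))) = p.2 ^ a * (∑ i : Fin n, ∑ j : Fin n, (fderiv ℝ (b i j) p.1 (EuclideanSpace.single i (1 : ℝ)) * fderiv ℝ (fun q' : EuclideanSpace ℝ (Fin n) × ℝ => fderiv ℝ V q' ((EuclideanSpace.single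 j (1 : ℝ)), (0 : ℝ))) p ((0 : EuclideanSpace ℝ (Fin n)), (1 : ℝ)) + b i j p.1 * fderiv ℝ (fun q' : EuclideanSpace ℝ (Fin n) × ℝ => fderiv ℝ (fun q'' : EuclideanSpace ℝ (Fin n) × ℝ => fderiv ℝ V q'' ((EuclideanSpace.single j (1 : ℝ)), (0 : ℝ))) q' ((EuclideanSpace.single i (1 : ℝ)), (0 : ℝ))) p ((0 : EuclideanSpace ℝ (Fin n)), (1 : ℝ)))) := by
    rw [Finset.mul_sum]
    refine Finset.sum_congr rfl fun i _ => ?_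
    rw [Finset.mul_sum]
    refine Finset.sum_congr rfl fun j _ => ?_
    ring
  rw [hfac]
  have e1 : p.2 ^ (a - 1) = p.2 ^ a * p.2⁻¹ := by
    rw [Real.rpow_sub hy, Real.rpow_one]
    ring
  have e2 : p.2 ^ (a - 1 - 1) = p.2 ^ a * p.2⁻¹ * p.2⁻¹ := by
    rw [Real.rpow_sub hy, Real.rpow_sub hy, Real.rpow_one]
    ring
  rw [e2, e1]
  linear_combination p.2 ^ a * hstar
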